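/- Let 𝒟 be a dyadic grid on ℝⁿ, let r ≥ 3 and τ ≥ 1 be integers, let 1/r < ε < 1 − 1/r, and suppose 0 < δ ≤ (rε − 1)/(r + τ). Then every (r−1, δ)-good dyadic cube I belongs to 𝒟^τ_{(r,ε)-good}; that is, every dyadic child of I is (r,ε)-good, and the ℓ-fold dyadic parents π^{(ℓ)}I are (r,ε)-good for all 0 ≤ ℓ ≤ τ. -/

import Mathlib

open MeasureTheory
open scoped ENNReal NNReal

noncomputable section

/-- An axis-parallel half-open cube in `ℝⁿ`, given by its corner `a` and side length `l`. -/
structure QCube (n : ℕ) where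
  a : Fin n → ℝ
  l : ℝ

/-- The half-open cube as a subset of `ℝⁿ`. -/
def QCube.pts {n : ℕ} (Q : QCube n) : Set (EuclideanSpace ℝ (Fin n)) :=
  {x | ∀ i, Q.a i ≤ x i ∧ x i < Q.a i + Q.l}

/-- The dyadic grid on `ℝⁿ` obtained by translating the standard grid by `t`. -/
def dyadicGrid {n : ℕ} (t : Fin n → ℝ) : Set (QCube n) :=
  {Q | ∃ (k : ℤ) (m : Fin n → ℤ),
    Q = ⟨fun i => t i + (2:ℝ) ^ (-k) * (m i : ℝ), (2:ℝ) ^ (-k)⟩}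

/-- `J ⋐_{r,ε} K` : `J` is `(r,ε)`-deeply embedded in `K`. -/
def deepEmb {n : ℕ} (r : ℕ) (ε : ℝ) (J K : QCube n) : Prop :=
  J.pts ⊆ K.pts ∧ J.l ≤ 2 ^ (-(r : ℝ)) * K.l ∧
    ∀ x ∈ J.pts, ∀ y ∉ K.pts, 1 / 2 * J.l ^ ε * K.l ^ (1 - ε) ≤ dist x y

/-- A dyadic cube `J` of the grid `t` is `(r,ε)`-good if `J ⋐_{r,ε} I` for every dyadic
cube `I ⊇ J` with `ℓ(J) ≤ 2^{−r} ℓ(I)`. -/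
def isGood {n : ℕ} (t : Fin n → ℝ) (r : ℕ) (ε : ℝ) (J : QCube n) : Prop :=
  ∀ I ∈ dyadicGrid t, J.pts ⊆ I.pts → J.l ≤ 2 ^ (-(r : ℝ)) * I.l → deepEmb r ε J I

/-! ### Auxiliary lemmas -/

lemma grid_l_pos {n : ℕ} {t : Fin n → ℝ} {Q : QCube n} (h : Q ∈ dyadicGrid t) : 0 < Q.l := by
  obtain ⟨k, m, rfl⟩ := h
  exact zpow_pos (by norm_num) _

lemma corner_mem {n : ℕ} (Q : QCube n) (h : 0 < Q.l) :
    (WithLp.toLp 2 Q.a : EuclideanSpace ℝ (Fin n)) ∈ Q.pts :=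
  fun i => ⟨le_refl _, by show Q.a i < Q.a i + Q.l; linarith⟩

lemma dist_coord_le {n : ℕ} (x y : EuclideanSpace ℝ (Fin n)) (i : Fin n) :
    |x i - y i| ≤ dist x y := by
  rw [EuclideanSpace.dist_eq]
  have h1 : dist (x i) (y i) ^ 2 ≤ ∑ j, dist (x j) (y j) ^ 2 :=
    Finset.single_le_sum (f := fun j => dist (x j) (y j) ^ 2)
      (fun j _ => sq_nonneg _) (Finset.mem_univ i)
  calc |x i - y i| = Real.sqrt (dist (x i) (y i) ^ 2) := by
        rw [Real.sqrt_sq_eq_abs, Real.dist_eq, abs_abs]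
    _ ≤ _ := Real.sqrt_le_sqrt h1

lemma dist_update {n : ℕ} (x : Fin n → ℝ) (i : Fin n) (v : ℝ) :
    dist (WithLp.toLp 2 x : EuclideanSpace ℝ (Fin n)) (WithLp.toLp 2 (Function.update x i v))
      = |(WithLp.toLp 2 x : EuclideanSpace ℝ (Fin n)) i - v| := by
  rw [EuclideanSpace.dist_eq]
  simp only [WithLp.ofLp_toLp]
  rw [Finset.sum_eq_single i]
  · rw [Function.update_self, Real.sqrt_sq_eq_abs, Real.dist_eq, abs_abs]
  · intro j _ hj
    rw [Function.update_of_ne hj, dist_self]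
    ring
  · intro h; exact absurd (Finset.mem_univ i) h

lemma pts_coord {n : ℕ} {Q Q' : QCube n} (hl : 0 < Q.l) (h : Q.pts ⊆ Q'.pts) (i : Fin n) :
    Q'.a i ≤ Q.a i ∧ Q.a i + Q.l ≤ Q'.a i + Q'.l := by
  have hc := h (corner_mem Q hl)
  refine ⟨(hc i).1, ?_⟩
  by_contra hcon
  push_neg at hcon
  obtain ⟨w, hw1, hw2⟩ := exists_between hcon
  have hmem : (WithLp.toLp 2 (Function.update Q.a i w) :
      EuclideanSpace ℝ (Fin n)) ∈ Q.pts := by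
    intro j
    show Q.a j ≤ Function.update Q.a i w j ∧ Function.update Q.a i w j < Q.a j + Q.l
    by_cases hj : j = i
    · subst hj
      rw [Function.update_self]
      exact ⟨le_of_lt ((hc j).2.trans hw1), hw2⟩
    · rw [Function.update_of_ne hj]
      exact ⟨le_refl _, by linarith⟩
  have h2 : Function.update Q.a i w i < Q'.a i + Q'.l := (h hmem i).2
  rw [Function.update_self] at h2
  linarith

lemma dyadic_nested {n : ℕ} {t : Fin n → ℝ} {Q Q' : QCube n}
    (hQ : Q ∈ dyadicGrid t) (hQ' : Q' ∈ dyadicGrid t) (hl : Q.l ≤ Q'.l)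
    {x : EuclideanSpace ℝ (Fin n)} (hx : x ∈ Q.pts) (hx' : x ∈ Q'.pts) :
    Q.pts ⊆ Q'.pts := by
  obtain ⟨k, m, rfl⟩ := hQ
  obtain ⟨k', m', rfl⟩ := hQ'
  simp only [QCube.pts, Set.mem_setOf_eq] at *
  have hk : k' ≤ k := by
    have := (zpow_le_zpow_iff_right₀ (a := (2:ℝ)) (by norm_num)).mp hl
    omega
  have cpos : (0:ℝ) < (2:ℝ) ^ (-k) := zpow_pos (by norm_num) _
  have hDcast : (((2 ^ (k - k').toNat : ℤ) : ℤ) : ℝ) = (2:ℝ) ^ ((k - k').toNat) := by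
    push_cast; ring
  have hD : (2:ℝ) ^ (-k') = (2:ℝ) ^ (-k) * (((2 ^ (k - k').toNat : ℤ)) : ℝ) := by
    rw [hDcast, ← zpow_natCast (2:ℝ) (k - k').toNat,
      Int.toNat_of_nonneg (by omega : (0:ℤ) ≤ k - k'),
      ← zpow_add₀ (by norm_num : (2:ℝ) ≠ 0)]
    ring_nf
  set D : ℤ := 2 ^ (k - k').toNat with hDdef
  intro z hz i
  have h1 := hx i
  have h2 := hx' i
  have h3 := hz i
  rw [hD] at h2 ⊢
  have hMm : (m' i) * D ≤ m i := by
    have hr : (2:ℝ)^(-k) * ((m' i : ℝ) * D) < (2:ℝ)^(-k) * ((m i : ℝ) + 1) := by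
      nlinarith [h2.1, h1.2]
    have h4 := (mul_lt_mul_iff_right₀ cpos).mp hr
    have h5 : ((m' i) * D : ℤ) < (m i : ℤ) + 1 := by exact_mod_cast h4
    omega
  have hmM : (m i) + 1 ≤ (m' i) * D + D := by
    have hr : (2:ℝ)^(-k) * (m i : ℝ) < (2:ℝ)^(-k) * ((m' i : ℝ) * D + D) := by
      nlinarith [h1.1, h2.2]
    have h4 := (mul_lt_mul_iff_right₀ cpos).mp hr
    have h5 : (m i : ℤ) < (m' i) * D + D := by exact_mod_cast h4
    omega
  have e1 : (2:ℝ)^(-k) * ((m' i : ℝ) * D) ≤ (2:ℝ)^(-k) * (m i) := by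
    apply mul_le_mul_of_nonneg_left _ (le_of_lt cpos)
    exact_mod_cast hMm
  have e2 : (2:ℝ)^(-k) * ((m i : ℝ) + 1) ≤ (2:ℝ)^(-k) * ((m' i : ℝ) * D + D) := by
    apply mul_le_mul_of_nonneg_left _ (le_of_lt cpos)
    exact_mod_cast hmM
  constructor
  · nlinarith [h3.1]
  · nlinarith [h3.2]

lemma child_bound {j a b ε δ : ℝ} (hj : 0 < j) (ha : 0 < a) (hb : 0 < b)
    (hja : j ≤ a) (hjb : j ≤ b) (hδ0 : 0 ≤ δ) (hδε : δ ≤ ε) :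
    j ^ ε * b ^ (1 - ε) ≤ a ^ δ * b ^ (1 - δ) := by
  apply (Real.log_le_log_iff (by positivity) (by positivity)).mp
  rw [Real.log_mul (by positivity) (by positivity),
    Real.log_mul (by positivity) (by positivity),
    Real.log_rpow hj, Real.log_rpow ha, Real.log_rpow hb, Real.log_rpow hb]
  have h1 : δ * Real.log j ≤ δ * Real.log a :=
    mul_le_mul_of_nonneg_left (Real.log_le_log hj hja) hδ0
  have h2 : (ε - δ) * Real.log j ≤ (ε - δ) * Real.log b :=
    mul_le_mul_of_nonneg_left (Real.log_le_log hj hjb) (by linarith)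
  nlinarith [h1, h2]

lemma parent_bound {a b p ε δ R L : ℝ} (ha : 0 < a) (hb : 0 < b) (hp : 0 < p)
    (hδ0 : 0 < δ) (hδε : δ < ε) (hε1 : ε < 1)
    (hP : Real.log p = L * Real.log 2 + Real.log a)
    (hB : Real.log p + R * Real.log 2 ≤ Real.log b)
    (hkey : (R + L) * δ ≤ R * ε - 1) (hkey2 : (R + L) * δ ≤ R - 2) :
    1 / 2 * p ^ ε * b ^ (1 - ε) + p ≤ 1 / 2 * a ^ δ * b ^ (1 - δ) := by
  set lg := Real.log 2 with hlg
  have hlgpos : 0 < lg := Real.log_pos (by norm_num)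
  have h3 : δ * Real.log p = δ * (L * lg + Real.log a) := by rw [hP]
  have hA : p ≤ 1 / 4 * (a ^ δ * b ^ (1 - δ)) := by
    apply (Real.log_le_log_iff hp (by positivity)).mp
    rw [Real.log_mul (by norm_num) (by positivity),
      Real.log_mul (by positivity) (by positivity),
      Real.log_rpow ha, Real.log_rpow hb]
    have l4 : Real.log (1 / 4 : ℝ) = -(2 * lg) := by
      rw [show (1/4 : ℝ) = (2:ℝ) ^ (-2 : ℤ) by norm_num, Real.log_zpow]
      push_cast; ring
    rw [l4]
    have h1 : (1 - δ) * (Real.log p + R * lg) ≤ (1 - δ) * Real.log b :=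
      mul_le_mul_of_nonneg_left hB (by linarith)
    have h2 : ((R + L) * δ + 2) * lg ≤ R * lg :=
      mul_le_mul_of_nonneg_right (by linarith) hlgpos.le
    nlinarith [h1, h2, h3]
  have hBB : p ^ ε * b ^ (1 - ε) ≤ 1 / 2 * (a ^ δ * b ^ (1 - δ)) := by
    apply (Real.log_le_log_iff (by positivity) (by positivity)).mp
    rw [Real.log_mul (by positivity) (by positivity),
      Real.log_mul (by norm_num) (by positivity),
      Real.log_mul (by positivity) (by positivity),
      Real.log_rpow hp, Real.log_rpow ha, Real.log_rpow hb, Real.log_rpow hb]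
    have l2 : Real.log (1 / 2 : ℝ) = -lg := by
      rw [show (1/2 : ℝ) = (2:ℝ)⁻¹ by norm_num, Real.log_inv]
    rw [l2]
    have h1 : (ε - δ) * (Real.log p + R * lg) ≤ (ε - δ) * Real.log b :=
      mul_le_mul_of_nonneg_left hB (by linarith)
    have h2 : (δ * L + 1) * lg ≤ (R * (ε - δ)) * lg :=
      mul_le_mul_of_nonneg_right (by linarith) hlgpos.le
    nlinarith [h1, h2, h3]
  nlinarith [hA, hBB]

set_option maxHeartbeats 1000000 in
/-- If `r ≥ 3`, `τ ≥ 1`, `1/r < ε < 1 − 1/r` and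
`0 < δ ≤ (rε − 1)/(r + τ)`, then every `(r−1,δ)`-good dyadic cube `I` lies in
`𝒟^τ_{(r,ε)-good}`: every dyadic child of `I` is `(r,ε)`-good and every `ℓ`-fold dyadic
parent of `I` with `0 ≤ ℓ ≤ τ` is `(r,ε)`-good. -/
theorem statement5 (n r τ : ℕ) (ε δ : ℝ) (hr : 3 ≤ r) (hτ : 1 ≤ τ)
    (hε1 : 1 / (r : ℝ) < ε) (hε2 : ε < 1 - 1 / (r : ℝ)) (hδ0 : 0 < δ)
    (hδ : δ ≤ ((r : ℝ) * ε - 1) / ((r : ℝ) + (τ : ℝ))) (t : Fin n → ℝ) :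
    ∀ I ∈ dyadicGrid t, isGood t (r - 1) δ I →
      (∀ J ∈ dyadicGrid t, J.pts ⊆ I.pts → J.l = I.l / 2 → isGood t r ε J) ∧
      (∀ ℓ : ℕ, ℓ ≤ τ → ∀ P ∈ dyadicGrid t, I.pts ⊆ P.pts → P.l = 2 ^ ℓ * I.l →
        isGood t r ε P) := by
  intro I hI hIgood
  set R : ℝ := (r : ℝ) with hRdef
  set T : ℝ := (τ : ℝ) with hTdef
  have hR3 : (3:ℝ) ≤ R := by rw [hRdef]; exact_mod_cast hr
  have hT1 : (1:ℝ) ≤ T := by rw [hTdef]; exact_mod_cast hτ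
  have hRpos : (0:ℝ) < R := by linarith
  have hε0 : 0 < ε := lt_trans (by positivity) hε1
  have hrε1 : 1 < ε * R := (div_lt_iff₀ hRpos).mp hε1
  have hε1' : ε < 1 := by
    have : 0 < 1 / R := by positivity
    linarith
  have hRT : (0:ℝ) < R + T := by linarith
  have hkeyRT : (R + T) * δ ≤ R * ε - 1 := by
    have := (le_div_iff₀ hRT).mp hδ
    linarith
  have hTε : 0 < T * ε := mul_pos (by linarith) hε0
  have hδε : δ < ε := by
    have h1 : (R + T) * δ < (R + T) * ε := by nlinarith [hkeyRT, hTε]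
    exact (mul_lt_mul_iff_right₀ hRT).mp h1
  have hcastr1 : (((r - 1 : ℕ)) : ℝ) = R - 1 := by
    rw [hRdef]
    push_cast [Nat.cast_sub (by omega : 1 ≤ r)]
    norm_num
  have hRe2 : R * ε - 1 ≤ R - 2 := by
    have hRinv : R * (1 / R) = 1 := by field_simp
    nlinarith [mul_lt_mul_of_pos_left hε2 hRpos, hRinv]
  have Ipos := grid_l_pos hI
  constructor
  · -- children
    intro J hJ hJI hJl K hK hJK hJlen
    refine ⟨hJK, hJlen, ?_⟩
    intro x hx y hy
    have Jpos := grid_l_pos hJ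
    have Kpos := grid_l_pos hK
    have h2R : (2:ℝ) ^ (-(R:ℝ)) ≤ 2 ^ (-1 : ℝ) :=
      (Real.rpow_le_rpow_left_iff (by norm_num)).mpr (by linarith)
    have h2R' : (2:ℝ) ^ (-(R:ℝ)) ≤ 1/2 := by
      rw [Real.rpow_neg_one] at h2R; linarith
    have hIl2J : I.l = 2 * J.l := by rw [hJl]; ring
    have hmul : (2:ℝ) ^ (-(R:ℝ)) * K.l ≤ 1/2 * K.l :=
      mul_le_mul_of_nonneg_right h2R' Kpos.le
    have hIlK : I.l ≤ K.l := by linarith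
    have hIK : I.pts ⊆ K.pts :=
      dyadic_nested hI hK hIlK (hJI (corner_mem J Jpos)) (hJK (corner_mem J Jpos))
    have hIlen2 : I.l ≤ 2 ^ (-((r - 1 : ℕ) : ℝ)) * K.l := by
      rw [hcastr1, show -(R - 1) = 1 + -R by ring, Real.rpow_add (by norm_num), Real.rpow_one]
      linarith [hJlen]
    have hdeep := hIgood K hK hIK hIlen2
    have hd := hdeep.2.2 x (hJI hx) y hy
    have hJleI : J.l ≤ I.l := by linarith
    have hJleK : J.l ≤ K.l := by linarith [hJlen]
    have := child_bound Jpos Ipos Kpos hJleI hJleK hδ0.le hδε.le (ε := ε) (δ := δ)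
    linarith
  · -- parents
    intro ℓ hℓ P hP hIP hPl K hK hPK hPlen
    refine ⟨hPK, hPlen, ?_⟩
    intro x hx y hy
    have Ppos := grid_l_pos hP
    have Kpos := grid_l_pos hK
    set L : ℝ := (ℓ : ℝ) with hLdef
    have hL0 : (0:ℝ) ≤ L := by positivity
    have hLT : L ≤ T := by rw [hLdef, hTdef]; exact_mod_cast hℓ
    have hkey : (R + L) * δ ≤ R * ε - 1 := by
      have := mul_le_mul_of_nonneg_right (by linarith : R + L ≤ R + T) hδ0.le
      linarith
    have hkey2 : (R + L) * δ ≤ R - 2 := by linarith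
    -- I.l ≤ P.l
    have h2ℓ1 : (1:ℝ) ≤ 2 ^ ℓ := one_le_pow₀ (by norm_num)
    have hIleP : I.l ≤ P.l := by
      rw [hPl]
      have := mul_le_mul_of_nonneg_right h2ℓ1 Ipos.le
      linarith
    have hIK : I.pts ⊆ K.pts := hIP.trans hPK
    have h2R : (2:ℝ) ^ (-(R:ℝ)) ≤ 2 ^ (-(R - 1)) :=
      (Real.rpow_le_rpow_left_iff (by norm_num)).mpr (by linarith)
    have hIlen2 : I.l ≤ 2 ^ (-((r - 1 : ℕ) : ℝ)) * K.l := by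
      rw [hcastr1]
      calc I.l ≤ P.l := hIleP
        _ ≤ 2 ^ (-(R:ℝ)) * K.l := hPlen
        _ ≤ 2 ^ (-(R - 1)) * K.l := mul_le_mul_of_nonneg_right h2R Kpos.le
    have hdeep := hIgood K hK hIK hIlen2
    have hc := hdeep.2.2
    set c : ℝ := 1 / 2 * I.l ^ δ * K.l ^ (1 - δ) with hcdef
    -- coordinatewise bounds from goodness of I
    have hIKco := pts_coord Ipos hIK
    have hIPco := pts_coord Ipos hIP
    have hPKco := pts_coord Ppos hPK
    have hlow : ∀ i, K.a i + c ≤ I.a i := by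
      intro i
      by_contra hcon
      push_neg at hcon
      have : I.a i - c < K.a i := by linarith
      obtain ⟨w, hw1, hw2⟩ := exists_between this
      have hynot : (WithLp.toLp 2 (Function.update I.a i w) :
          EuclideanSpace ℝ (Fin n)) ∉ K.pts := by
        intro hmem
        have : K.a i ≤ Function.update I.a i w i := (hmem i).1
        rw [Function.update_self] at this
        linarith
      have hd := hc (WithLp.toLp 2 I.a : EuclideanSpace ℝ (Fin n)) (corner_mem I Ipos) _ hynot
      rw [dist_update] at hd
      have hIa : (WithLp.toLp 2 I.a : EuclideanSpace ℝ (Fin n)) i = I.a i := rfl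
      rw [hIa, abs_of_nonneg (by linarith [(hIKco i).1])] at hd
      linarith
    have hhigh : ∀ i, c ≤ K.a i + K.l - I.a i := by
      intro i
      have hynot : (WithLp.toLp 2 (Function.update I.a i (K.a i + K.l)) :
          EuclideanSpace ℝ (Fin n)) ∉ K.pts := by
        intro hmem
        have : Function.update I.a i (K.a i + K.l) i < K.a i + K.l := (hmem i).2
        rw [Function.update_self] at this
        linarith
      have hd := hc (WithLp.toLp 2 I.a : EuclideanSpace ℝ (Fin n)) (corner_mem I Ipos) _ hynot
      rw [dist_update] at hd
      have hIa : (WithLp.toLp 2 I.a : EuclideanSpace ℝ (Fin n)) i = I.a i := rfl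
      have hle : I.a i ≤ K.a i + K.l := by linarith [(hIKco i).2]
      rw [hIa, abs_of_nonpos (by linarith)] at hd
      linarith
    -- the distance bound
    have hdistlb : c - P.l ≤ dist x y := by
      simp only [QCube.pts, Set.mem_setOf_eq] at hy
      push_neg at hy
      obtain ⟨i, hi⟩ := hy
      have habs := dist_coord_le x y i
      by_cases hA : K.a i ≤ y i
      · -- far side : y i ≥ K.a i + K.l
        have hyi := hi hA
        have hxi := (hx i).2
        have h1 := hhigh i
        have h2 := (hIPco i).1
        have : c - P.l ≤ y i - x i := by linarith
        have : y i - x i ≤ |x i - y i| := by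
          rw [abs_sub_comm]; exact le_abs_self _
        linarith [this, habs, hhigh i]
      · -- near side : y i < K.a i
        push_neg at hA
        have hxi := (hx i).1
        have h1 := hlow i
        have h2 := (hIPco i).2
        have h3 : c - P.l ≤ x i - y i := by linarith
        have h4 : x i - y i ≤ |x i - y i| := le_abs_self _
        linarith
    -- log facts for parent_bound
    have hPlog : Real.log P.l = L * Real.log 2 + Real.log I.l := by
      rw [hPl, Real.log_mul (by positivity) Ipos.ne', Real.log_pow]
    have hBlog : Real.log P.l + R * Real.log 2 ≤ Real.log K.l := by
      have hb : (2:ℝ) ^ (R:ℝ) * P.l ≤ K.l := by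
        have h1 : (2:ℝ) ^ (R:ℝ) * P.l ≤ (2:ℝ) ^ (R:ℝ) * ((2:ℝ) ^ (-(R:ℝ)) * K.l) :=
          mul_le_mul_of_nonneg_left hPlen (by positivity)
        have h2 : (2:ℝ) ^ (R:ℝ) * ((2:ℝ) ^ (-(R:ℝ)) * K.l) = K.l := by
          rw [← mul_assoc, ← Real.rpow_add (by norm_num)]
          simp
        linarith
      have := Real.log_le_log (by positivity) hb
      rw [Real.log_mul (by positivity) Ppos.ne', Real.log_rpow (by norm_num)] at this
      linarith
    have hmain := parent_bound Ipos Kpos Ppos hδ0 hδε hε1' hPlog hBlog hkey hkey2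
    have hc' : c = 1 / 2 * I.l ^ δ * K.l ^ (1 - δ) := hcdef
    linarith
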